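/- Fourier expansion of a Dedekind–Rademacher-type sum: Let c_1, c_2 be positive integers with gcd(c_1, c_2) = 1, and let t be an integer. Then (1/c_1) · Σ_λ λ^t / ((1 − λ^{c_2})(1 − λ)), where the sum runs over all complex c_1-th roots of unity λ ≠ 1, equals Σ_{k=0}^{c_1 − 1} (((−c_2 k − t)/c_1)) · ((k/c_1)) − 1/(4 c_1), where ((x)) = x − ⌊x⌋ − 1/2 denotes the sawtooth function (in particular, the left-hand side is a rational real number). -/

import Mathlib

/-- The sawtooth function `((x)) = x − ⌊x⌋ − 1/2`. -/
def sawtooth (x : ℚ) : ℚ := x - ⌊x⌋ - 1 / 2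

open Finset Polynomial

private def rres (c₁ c₂ : ℕ) (t : ℤ) (j : ℕ) : ℕ := ((-t - c₂ * j) % (c₁ : ℤ)).toNat

private lemma rres_int (c₁ c₂ : ℕ) (hc₁ : 0 < c₁) (t : ℤ) (j : ℕ) :
    (rres c₁ c₂ t j : ℤ) = (-t - c₂ * j) % (c₁ : ℤ) := by
  have h1 : (0:ℤ) < c₁ := by exact_mod_cast hc₁
  have h2 := Int.emod_nonneg (-t - c₂ * j) h1.ne'
  unfold rres; omega

private lemma rres_lt (c₁ c₂ : ℕ) (hc₁ : 0 < c₁) (t : ℤ) (j : ℕ) : rres c₁ c₂ t j < c₁ := by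
  have h1 : (0:ℤ) < c₁ := by exact_mod_cast hc₁
  have := Int.emod_lt_of_pos (-t - c₂ * j) h1
  have h2 := Int.emod_nonneg (-t - c₂ * j) h1.ne'
  unfold rres; omega

private lemma dvd_iff_rres (c₁ c₂ : ℕ) (hc₁ : 0 < c₁) (t : ℤ) (j k : ℕ) (hk : k < c₁) :
    c₁ ∣ (t % (c₁:ℤ)).toNat + c₂ * j + k ↔ k = rres c₁ c₂ t j := by
  have h1 : (0:ℤ) < c₁ := by exact_mod_cast hc₁
  have hT : ((t % (c₁:ℤ)).toNat : ℤ) = t % (c₁:ℤ) := by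
    have := Int.emod_nonneg t h1.ne'; omega
  have h3 : (c₁:ℤ) ∣ t % (c₁:ℤ) - t := by
    rw [Int.emod_def]; exact ⟨-(t / (c₁:ℤ)), by ring⟩
  have hcast : (c₁ ∣ (t % (c₁:ℤ)).toNat + c₂ * j + k)
      ↔ ((c₁:ℤ) ∣ t % (c₁:ℤ) + c₂ * j + k) := by
    rw [← hT]; exact_mod_cast (Int.natCast_dvd_natCast (m := c₁)).symm
  rw [hcast]
  constructor
  · intro h
    have h2 : (c₁:ℤ) ∣ (-t - c₂ * j) - k := by
      have heq : (-t - c₂ * j) - (k:ℤ)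
          = -(t % (c₁:ℤ) + c₂ * j + k) + (t % (c₁:ℤ) - t) := by ring
      rw [heq]; exact dvd_add (dvd_neg.2 h) h3
    have hmod : (k:ℤ) % (c₁:ℤ) = (-t - c₂ * j) % (c₁:ℤ) := Int.modEq_iff_dvd.2 h2
    have hkk : (k:ℤ) % (c₁:ℤ) = k := Int.emod_eq_of_lt (by positivity) (by exact_mod_cast hk)
    have := rres_int c₁ c₂ hc₁ t j
    omega
  · rintro rfl
    have h4 : (c₁:ℤ) ∣ (-t - c₂ * j) % (c₁:ℤ) - (-t - c₂ * j) := by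
      rw [Int.emod_def]; exact ⟨-((-t - c₂ * j) / (c₁:ℤ)), by ring⟩
    have heq : t % (c₁:ℤ) + c₂ * j + (rres c₁ c₂ t j : ℤ)
        = (t % (c₁:ℤ) - t) + ((-t - c₂ * j) % (c₁:ℤ) - (-t - c₂ * j)) := by
      rw [rres_int c₁ c₂ hc₁ t j]; ring
    rw [heq]; exact dvd_add h3 h4

private lemma sawtooth_int_div (a : ℤ) (c₁ : ℕ) :
    sawtooth ((a : ℚ) / (c₁ : ℚ)) = ((a % (c₁:ℤ) : ℤ) : ℚ) / (c₁ : ℚ) - 1 / 2 := by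
  unfold sawtooth
  rw [Rat.floor_intCast_div_natCast, Int.emod_def]
  rcases Nat.eq_zero_or_pos c₁ with rfl | hc
  · simp
  have hc0 : (c₁ : ℚ) ≠ 0 := by positivity
  push_cast
  field_simp

private lemma rres_injOn (c₁ c₂ : ℕ) (hc₁ : 0 < c₁) (hgcd : Nat.Coprime c₁ c₂) (t : ℤ) :
    ∀ j ∈ range c₁, ∀ j' ∈ range c₁, rres c₁ c₂ t j = rres c₁ c₂ t j' → j = j' := by
  intro j hj j' hj' h
  rw [Finset.mem_range] at hj hj'
  have h1 : (0:ℤ) < c₁ := by exact_mod_cast hc₁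
  have hcop : IsCoprime (c₁ : ℤ) (c₂ : ℤ) := by
    rw [Int.isCoprime_iff_gcd_eq_one, Int.gcd_natCast_natCast]; exact hgcd
  have hmod : (-t - c₂ * j) % (c₁:ℤ) = (-t - c₂ * j') % (c₁:ℤ) := by
    have a := rres_int c₁ c₂ hc₁ t j; have b := rres_int c₁ c₂ hc₁ t j'; omega
  have hdvd : (c₁:ℤ) ∣ (-t - c₂ * j') - (-t - c₂ * j) := Int.ModEq.dvd hmod
  have hdvd2 : (c₁:ℤ) ∣ ((j:ℤ) - j') * c₂ := by
    have heq : ((j:ℤ) - j') * c₂ = (-t - c₂ * j') - (-t - c₂ * j) := by ring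
    rw [heq]; exact hdvd
  have hdvd3 : (c₁:ℤ) ∣ (j:ℤ) - j' := hcop.dvd_of_dvd_mul_right hdvd2
  have := Int.eq_zero_of_dvd_of_natAbs_lt_natAbs hdvd3 (by
    have : ((j:ℤ) - j').natAbs < c₁ := by omega
    simpa using this)
  omega

private lemma sum_rres (c₁ c₂ : ℕ) (hc₁ : 0 < c₁) (hgcd : Nat.Coprime c₁ c₂) (t : ℤ)
    (f : ℕ → ℚ) :
    ∑ k ∈ range c₁, f (rres c₁ c₂ t k) = ∑ k ∈ range c₁, f k := by
  have himg : (range c₁).image (rres c₁ c₂ t) = range c₁ := by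
    apply Finset.eq_of_subset_of_card_le
    · intro m hm
      rw [Finset.mem_image] at hm
      obtain ⟨k, _, rfl⟩ := hm
      exact Finset.mem_range.2 (rres_lt c₁ c₂ hc₁ t k)
    · rw [Finset.card_range, Finset.card_image_of_injOn (fun a ha b hb h =>
        rres_injOn c₁ c₂ hc₁ hgcd t a ha b hb h), Finset.card_range]
  conv_rhs => rw [← himg]
  rw [Finset.sum_image (rres_injOn c₁ c₂ hc₁ hgcd t)]

private lemma sum_nthRoots_pow (n : ℕ) (hn : 0 < n) (N : ℕ) :
    ∑ z ∈ Polynomial.nthRootsFinset n (1 : ℂ), z ^ N = if n ∣ N then (n : ℂ) else 0 := by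
  classical
  have hζ := Complex.isPrimitiveRoot_exp n hn.ne'
  set ζ := Complex.exp (2 * Real.pi * Complex.I / n)
  have himg : Polynomial.nthRootsFinset n (1 : ℂ) = (Finset.range n).image (ζ ^ ·) := by
    rw [Polynomial.nthRootsFinset_def, hζ.nthRoots_eq (one_pow n)]
    ext x
    simp [Finset.mem_image]
  rw [himg, Finset.sum_image
    (fun i hi j hj h => hζ.injOn_pow (by simpa using hi) (by simpa using hj) h)]
  simp_rw [← pow_mul, mul_comm, pow_mul]
  by_cases h : n ∣ N
  · rw [if_pos h]
    have : ζ ^ N = 1 := hζ.pow_eq_one_iff_dvd N |>.2 h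
    simp [this]
  · rw [if_neg h]
    have hne : ζ ^ N ≠ 1 := fun hh => h ((hζ.pow_eq_one_iff_dvd N).1 hh)
    rw [geom_sum_eq hne, ← pow_mul, mul_comm N n, pow_mul, hζ.pow_eq_one, one_pow]
    simp

private lemma sum_erase_pow (n : ℕ) (hn : 0 < n) (N : ℕ) :
    ∑ z ∈ (Polynomial.nthRootsFinset n (1 : ℂ)).erase 1, z ^ N
      = (if n ∣ N then (n : ℂ) else 0) - 1 := by
  have h := Finset.sum_erase_add (Polynomial.nthRootsFinset n (1 : ℂ)) (fun z => z ^ N)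
    (Polynomial.one_mem_nthRootsFinset hn)
  rw [sum_nthRoots_pow n hn N] at h
  simp only [one_pow] at h
  linear_combination h

private lemma geom_aux (z : ℂ) (n : ℕ) :
    (z - 1) * ∑ k ∈ range n, (k : ℂ) * z ^ k
      = ((n : ℂ) - 1) * z ^ n - ∑ k ∈ range n, z ^ k + 1 := by
  induction n with
  | zero => simp
  | succ m ih =>
    rw [Finset.sum_range_succ, Finset.sum_range_succ (fun k => z ^ k), mul_add]
    rw [ih]
    push_cast
    ring

private lemma key_S {n : ℕ} (hn : 0 < n) {z : ℂ} (hzn : z ^ n = 1) (hz1 : z ≠ 1) :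
    (1 - z)⁻¹ = -(1 / (n : ℂ)) * ∑ k ∈ range n, (k : ℂ) * z ^ k := by
  have hn0 : (n : ℂ) ≠ 0 := Nat.cast_ne_zero.2 hn.ne'
  have hgeom : ∑ k ∈ range n, z ^ k = 0 := by
    rw [geom_sum_eq hz1, hzn, sub_self, zero_div]
  have hS := geom_aux z n
  rw [hzn, hgeom] at hS
  have h1z : (1 : ℂ) - z ≠ 0 := sub_ne_zero.2 (Ne.symm hz1)
  field_simp
  linear_combination -hS

private lemma per_z (c₁ c₂ : ℕ) (hc₁ : 0 < c₁) (hgcd : Nat.Coprime c₁ c₂) (t : ℤ)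
    (z : ℂ) (hz : z ∈ Polynomial.nthRootsFinset c₁ (1 : ℂ)) (hz1 : z ≠ 1) :
    z ^ t / ((1 - z ^ c₂) * (1 - z)) =
      (1 / (c₁ : ℂ)) ^ 2 * ∑ j ∈ range c₁, ∑ k ∈ range c₁,
        ((j : ℂ) * (k : ℂ)) * z ^ ((t % (c₁ : ℤ)).toNat + c₂ * j + k) := by
  have hzn : z ^ c₁ = 1 := (Polynomial.mem_nthRootsFinset hc₁ _).1 hz
  have hz0 : z ≠ 0 := Polynomial.ne_zero_of_mem_nthRootsFinset one_ne_zero hz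
  have hzc2 : z ^ c₂ ≠ 1 := by
    intro h
    apply hz1
    have h1 : orderOf z ∣ c₁ := orderOf_dvd_of_pow_eq_one hzn
    have h2 : orderOf z ∣ c₂ := orderOf_dvd_of_pow_eq_one h
    have : orderOf z ∣ Nat.gcd c₁ c₂ := Nat.dvd_gcd h1 h2
    rw [hgcd] at this
    exact orderOf_eq_one_iff.1 (Nat.eq_one_of_dvd_one this)
  have hzc2n : (z ^ c₂) ^ c₁ = 1 := by rw [← pow_mul, mul_comm, pow_mul, hzn, one_pow]
  have hinv1 : (1 - z)⁻¹ = -(1 / (c₁ : ℂ)) * ∑ k ∈ range c₁, (k : ℂ) * z ^ k :=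
    key_S hc₁ hzn hz1
  have hinv2 : (1 - z ^ c₂)⁻¹ = -(1 / (c₁ : ℂ)) * ∑ j ∈ range c₁, (j : ℂ) * (z ^ c₂) ^ j :=
    key_S hc₁ hzc2n hzc2
  have hzt : z ^ t = z ^ (t % (c₁ : ℤ)).toNat := by
    conv_lhs => rw [← Int.emod_add_mul_ediv t (c₁ : ℤ)]
    rw [zpow_add₀ hz0, zpow_mul, zpow_natCast, hzn, one_zpow, mul_one,
      ← zpow_natCast, Int.toNat_of_nonneg (Int.emod_nonneg t (by exact_mod_cast hc₁.ne'))]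
  have expand : ∑ j ∈ range c₁, ∑ k ∈ range c₁,
      ((j : ℂ) * (k : ℂ)) * z ^ ((t % (c₁ : ℤ)).toNat + c₂ * j + k)
      = z ^ (t % (c₁ : ℤ)).toNat * ((∑ j ∈ range c₁, (j : ℂ) * (z ^ c₂) ^ j)
          * ∑ k ∈ range c₁, (k : ℂ) * z ^ k) := by
    rw [Finset.sum_mul_sum, Finset.mul_sum]
    apply Finset.sum_congr rfl; intro j _
    rw [Finset.mul_sum]
    apply Finset.sum_congr rfl; intro k _
    rw [pow_add, pow_add, ← pow_mul]
    ring
  rw [div_eq_mul_inv, mul_inv, hinv1, hinv2, hzt, expand]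
  ring

private lemma sum_range_cast (n : ℕ) :
    ∑ j ∈ range n, (j : ℚ) = (n : ℚ) * ((n : ℚ) - 1) / 2 := by
  induction n with
  | zero => simp
  | succ m ih => rw [Finset.sum_range_succ, ih]; push_cast; ring

private lemma innerSumQ (c₁ c₂ : ℕ) (hc₁ : 0 < c₁) (t : ℤ) (j : ℕ) :
    ∑ k ∈ range c₁, (k : ℚ) *
        (if c₁ ∣ (t % (c₁:ℤ)).toNat + c₂ * j + k then (c₁ : ℚ) else 0)
      = (c₁ : ℚ) * (rres c₁ c₂ t j : ℚ) := by
  rw [Finset.sum_eq_single (rres c₁ c₂ t j)]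
  · rw [if_pos ((dvd_iff_rres c₁ c₂ hc₁ t j _ (rres_lt c₁ c₂ hc₁ t j)).2 rfl)]
    ring
  · intro k hk hne
    rw [if_neg fun hd => hne ((dvd_iff_rres c₁ c₂ hc₁ t j k (Finset.mem_range.1 hk)).1 hd)]
    ring
  · intro h
    exact absurd (Finset.mem_range.2 (rres_lt c₁ c₂ hc₁ t j)) h

private lemma rat_side (c₁ c₂ : ℕ) (hc₁ : 0 < c₁) (hgcd : Nat.Coprime c₁ c₂) (t : ℤ) :
    (1 / (c₁ : ℚ)) ^ 3 * ∑ j ∈ range c₁, ∑ k ∈ range c₁,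
        (j : ℚ) * (k : ℚ) *
          ((if c₁ ∣ (t % (c₁:ℤ)).toNat + c₂ * j + k then (c₁ : ℚ) else 0) - 1)
      = ∑ k ∈ Finset.range c₁,
          sawtooth ((-(c₂ : ℚ) * k - t) / (c₁ : ℚ)) * sawtooth ((k : ℚ) / (c₁ : ℚ))
        - 1 / (4 * c₁) := by
  have hc0 : (c₁ : ℚ) ≠ 0 := Nat.cast_ne_zero.2 hc₁.ne'
  -- LHS double sum
  have hdouble : ∑ j ∈ range c₁, ∑ k ∈ range c₁,
      (j : ℚ) * (k : ℚ) *
        ((if c₁ ∣ (t % (c₁:ℤ)).toNat + c₂ * j + k then (c₁ : ℚ) else 0) - 1)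
      = (c₁ : ℚ) * ∑ j ∈ range c₁, (j : ℚ) * (rres c₁ c₂ t j : ℚ)
        - ((c₁ : ℚ) * ((c₁ : ℚ) - 1) / 2) ^ 2 := by
    have step : ∀ j ∈ range c₁, ∑ k ∈ range c₁,
        (j : ℚ) * (k : ℚ) *
          ((if c₁ ∣ (t % (c₁:ℤ)).toNat + c₂ * j + k then (c₁ : ℚ) else 0) - 1)
        = (c₁ : ℚ) * ((j : ℚ) * (rres c₁ c₂ t j : ℚ)) - (j : ℚ) * ((c₁:ℚ) * ((c₁:ℚ)-1)/2) := by
      intro j _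
      have expand : ∀ k ∈ range c₁, (j : ℚ) * (k : ℚ) *
          ((if c₁ ∣ (t % (c₁:ℤ)).toNat + c₂ * j + k then (c₁ : ℚ) else 0) - 1)
          = (j : ℚ) * ((k:ℚ) * (if c₁ ∣ (t % (c₁:ℤ)).toNat + c₂ * j + k then (c₁ : ℚ) else 0))
            - (j : ℚ) * (k : ℚ) := by
        intro k _; ring
      rw [Finset.sum_congr rfl expand, Finset.sum_sub_distrib, ← Finset.mul_sum,
        ← Finset.mul_sum, innerSumQ c₁ c₂ hc₁ t j, sum_range_cast]
      ring
    rw [Finset.sum_congr rfl step, Finset.sum_sub_distrib, ← Finset.mul_sum,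
      ← Finset.sum_mul, sum_range_cast]
    ring
  -- RHS sum
  have hsaw : ∀ k ∈ range c₁,
      sawtooth ((-(c₂ : ℚ) * k - t) / (c₁ : ℚ)) * sawtooth ((k : ℚ) / (c₁ : ℚ))
      = ((rres c₁ c₂ t k : ℚ) / c₁ - 1/2) * ((k : ℚ) / c₁ - 1/2) := by
    intro k hk
    have h1 : (-(c₂ : ℚ) * k - t) = (((-t - c₂ * k : ℤ) : ℚ)) := by push_cast; ring
    have h2 : ((k : ℚ)) = (((k : ℤ) : ℚ)) := by push_cast; ring
    rw [h1, h2, sawtooth_int_div, sawtooth_int_div]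
    have h3 : (-t - c₂ * k) % (c₁:ℤ) = (rres c₁ c₂ t k : ℤ) := (rres_int c₁ c₂ hc₁ t k).symm
    have h4 : (k:ℤ) % (c₁:ℤ) = (k:ℤ) :=
      Int.emod_eq_of_lt (by positivity) (by exact_mod_cast Finset.mem_range.1 hk)
    rw [h3, h4]
    push_cast
    ring
  rw [Finset.sum_congr rfl hsaw]
  have hexp : ∀ k ∈ range c₁,
      ((rres c₁ c₂ t k : ℚ) / c₁ - 1/2) * ((k : ℚ) / c₁ - 1/2)
      = (1/(c₁:ℚ)^2) * ((k:ℚ) * (rres c₁ c₂ t k : ℚ))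
        - (1/(2*c₁)) * (rres c₁ c₂ t k : ℚ) - (1/(2*c₁)) * (k:ℚ) + 1/4 := by
    intro k _
    field_simp
    ring
  rw [Finset.sum_congr rfl hexp]
  have hsplit : ∑ k ∈ range c₁,
      ((1/(c₁:ℚ)^2) * ((k:ℚ) * (rres c₁ c₂ t k : ℚ))
        - (1/(2*c₁)) * (rres c₁ c₂ t k : ℚ) - (1/(2*c₁)) * (k:ℚ) + 1/4)
      = (1/(c₁:ℚ)^2) * (∑ k ∈ range c₁, (k:ℚ) * (rres c₁ c₂ t k : ℚ))
        - (1/(2*c₁)) * (∑ k ∈ range c₁, (rres c₁ c₂ t k : ℚ))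
        - (1/(2*c₁)) * (∑ k ∈ range c₁, (k:ℚ)) + (c₁:ℚ) * (1/4) := by
    rw [Finset.sum_add_distrib, Finset.sum_sub_distrib, Finset.sum_sub_distrib,
      ← Finset.mul_sum, ← Finset.mul_sum, ← Finset.mul_sum]
    simp [mul_comm]
  rw [hsplit]
  have hsum_r : ∑ k ∈ range c₁, ((rres c₁ c₂ t k : ℚ)) = (c₁:ℚ) * ((c₁:ℚ)-1)/2 := by
    rw [sum_rres c₁ c₂ hc₁ hgcd t (fun m => (m : ℚ)), sum_range_cast]
  rw [hsum_r, sum_range_cast, hdouble]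
  field_simp
  ring

/-- **Fourier expansion of a Dedekind–Rademacher-type sum.**
For coprime positive integers `c₁, c₂` and an integer `t`,
`(1/c₁) ∑_{λ^{c₁}=1, λ≠1} λ^t / ((1−λ^{c₂})(1−λ))
  = ∑_{k=0}^{c₁−1} (((−c₂k−t)/c₁)) ((k/c₁)) − 1/(4c₁)`,
where the sum on the left runs over the nontrivial complex `c₁`-th roots of unity;
in particular the left-hand side is a rational real number. -/
theorem fourier_dedekind_sum_formula
    (c₁ c₂ : ℕ) (hc₁ : 0 < c₁) (hc₂ : 0 < c₂) (hgcd : Nat.Coprime c₁ c₂) (t : ℤ) :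
    (1 / (c₁ : ℂ)) *
        ∑ z ∈ (Polynomial.nthRootsFinset c₁ (1 : ℂ)).erase 1,
          z ^ t / ((1 - z ^ c₂) * (1 - z))
      = ((∑ k ∈ Finset.range c₁,
            sawtooth ((-(c₂ : ℚ) * k - t) / (c₁ : ℚ)) * sawtooth ((k : ℚ) / (c₁ : ℚ))
          - 1 / (4 * c₁) : ℚ) : ℂ) := by
  classical
  rw [← rat_side c₁ c₂ hc₁ hgcd t]
  rw [Finset.sum_congr rfl (fun z hz => per_z c₁ c₂ hc₁ hgcd t z
    (Finset.mem_of_mem_erase hz) (Finset.ne_of_mem_erase hz))]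
  rw [← Finset.mul_sum, Finset.sum_comm]
  have hswap : ∀ j ∈ range c₁, ∑ z ∈ (Polynomial.nthRootsFinset c₁ (1 : ℂ)).erase 1,
      ∑ k ∈ range c₁, ((j : ℂ) * (k : ℂ)) * z ^ ((t % (c₁ : ℤ)).toNat + c₂ * j + k)
      = ∑ k ∈ range c₁, ((j : ℂ) * (k : ℂ)) *
          ((if c₁ ∣ (t % (c₁:ℤ)).toNat + c₂ * j + k then (c₁ : ℂ) else 0) - 1) := by
    intro j _
    rw [Finset.sum_comm]
    apply Finset.sum_congr rfl; intro k _
    rw [← Finset.mul_sum, sum_erase_pow c₁ hc₁ _]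
  rw [Finset.sum_congr rfl hswap]
  push_cast [apply_ite (Rat.cast (K := ℂ))]
  ring
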